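/- Let K = Q(√5) and α = 5 + √5. Then the matrix C with columns c1 = (√(5+√5), √(5−√5)) and c2 = ((1−√5)/2·√(5+√5), (1+√5)/2·√(5−√5)) has orthogonal columns of equal norm: c1·c2 = 0 and ||c1||^2 = ||c2||^2 = 10. In particular, the lattice C·Z^2 is well-rounded. -/

import Mathlib

noncomputable section

/-- The planar lattice spanned over ℤ by `v1, v2` in Euclidean plane. -/
def lat (v1 v2 : EuclideanSpace ℝ (Fin 2)) : Set (EuclideanSpace ℝ (Fin 2)) :=
  {x | ∃ m n : ℤ, x = m • v1 + n • v2}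

/-- The `i`-th successive minimum of a set `L` in the Euclidean plane. -/
noncomputable def succMin (L : Set (EuclideanSpace ℝ (Fin 2))) (i : ℕ) : ℝ :=
  sInf {μ : ℝ | 0 ≤ μ ∧ i ≤ Module.finrank ℝ (Submodule.span ℝ {x ∈ L | ‖x‖ ≤ μ})}

/-- The twist of the canonical basis of the ring of integers of Q(√5) by
α = 5 + √5 has orthogonal columns of equal norm 10; in particular the resulting
lattice is well-rounded. -/
theorem stmt_7 :
    let c1 : EuclideanSpace ℝ (Fin 2) := (WithLp.equiv 2 (Fin 2 → ℝ)).symm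
      ![Real.sqrt (5 + Real.sqrt 5), Real.sqrt (5 - Real.sqrt 5)]
    let c2 : EuclideanSpace ℝ (Fin 2) := (WithLp.equiv 2 (Fin 2 → ℝ)).symm
      ![(1 - Real.sqrt 5) / 2 * Real.sqrt (5 + Real.sqrt 5),
        (1 + Real.sqrt 5) / 2 * Real.sqrt (5 - Real.sqrt 5)]
    (inner ℝ c1 c2 : ℝ) = 0 ∧ ‖c1‖ ^ 2 = 10 ∧ ‖c2‖ ^ 2 = 10 ∧
      succMin (lat c1 c2) 1 = succMin (lat c1 c2) 2 := by
  intro c1 c2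
  have hs5 : Real.sqrt 5 ^ 2 = 5 := Real.sq_sqrt (by norm_num)
  have hs5nn : (0:ℝ) ≤ Real.sqrt 5 := Real.sqrt_nonneg 5
  have hs5le : Real.sqrt 5 ≤ 5 := by nlinarith
  have ha : Real.sqrt (5 + Real.sqrt 5) ^ 2 = 5 + Real.sqrt 5 :=
    Real.sq_sqrt (by linarith)
  have hb : Real.sqrt (5 - Real.sqrt 5) ^ 2 = 5 - Real.sqrt 5 :=
    Real.sq_sqrt (by linarith)
  have h12 : (inner ℝ c1 c2 : ℝ) = 0 := by
    simp only [c1, c2, PiLp.inner_apply, RCLike.inner_apply, Fin.sum_univ_two,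
      WithLp.equiv_symm_apply, PiLp.toLp_apply, Matrix.cons_val_zero, Matrix.cons_val_one, Matrix.head_cons,
      starRingEnd_apply, star_trivial]
    nlinarith [ha, hb, hs5]
  have h11 : (inner ℝ c1 c1 : ℝ) = 10 := by
    simp only [c1, PiLp.inner_apply, RCLike.inner_apply, Fin.sum_univ_two,
      WithLp.equiv_symm_apply, PiLp.toLp_apply, Matrix.cons_val_zero, Matrix.cons_val_one, Matrix.head_cons,
      starRingEnd_apply, star_trivial]
    nlinarith [ha, hb]
  have h22 : (inner ℝ c2 c2 : ℝ) = 10 := by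
    simp only [c2, PiLp.inner_apply, RCLike.inner_apply, Fin.sum_univ_two,
      WithLp.equiv_symm_apply, PiLp.toLp_apply, Matrix.cons_val_zero, Matrix.cons_val_one, Matrix.head_cons,
      starRingEnd_apply, star_trivial]
    nlinarith [ha, hb, hs5]
  have hn1 : ‖c1‖ ^ 2 = 10 := by rw [← real_inner_self_eq_norm_sq]; exact h11
  have hn2 : ‖c2‖ ^ 2 = 10 := by rw [← real_inner_self_eq_norm_sq]; exact h22
  have h21 : (inner ℝ c2 c1 : ℝ) = 0 := by rw [real_inner_comm]; exact h12
  refine ⟨h12, hn1, hn2, ?_⟩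
  clear_value c1 c2
  clear hs5 hs5nn hs5le ha hb
  -- norm of a general lattice vector
  have hkey : ∀ m n : ℤ, ‖(m • c1 + n • c2 : EuclideanSpace ℝ (Fin 2))‖ ^ 2
      = 10 * ((m:ℝ)^2 + (n:ℝ)^2) := by
    intro m n
    rw [← real_inner_self_eq_norm_sq]
    rw [← Int.cast_smul_eq_zsmul ℝ m c1, ← Int.cast_smul_eq_zsmul ℝ n c2]
    simp only [inner_add_left, inner_add_right, real_inner_smul_left, real_inner_smul_right,
      h11, h22, h12, h21]
    ring
  -- linear independence of c1 c2
  have hind : LinearIndependent ℝ ![c1, c2] := by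
    rw [LinearIndependent.pair_iff]
    intro s t hst
    have h1 : (inner ℝ (s • c1 + t • c2) c1 : ℝ) = 0 := by rw [hst]; simp
    have h2 : (inner ℝ (s • c1 + t • c2) c2 : ℝ) = 0 := by rw [hst]; simp
    simp only [inner_add_left, real_inner_smul_left, h11, h22, h12, h21] at h1 h2
    constructor <;> nlinarith
  have hc1ne : ‖c1‖ = Real.sqrt 10 := by
    rw [show (10:ℝ) = ‖c1‖^2 from hn1.symm, Real.sqrt_sq (norm_nonneg _)]
  have hc2ne : ‖c2‖ = Real.sqrt 10 := by
    rw [show (10:ℝ) = ‖c2‖^2 from hn2.symm, Real.sqrt_sq (norm_nonneg _)]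
  -- the two defining sets coincide
  have hsets : {μ : ℝ | 0 ≤ μ ∧ 1 ≤ Module.finrank ℝ
        (Submodule.span ℝ {x ∈ lat c1 c2 | ‖x‖ ≤ μ})}
      = {μ : ℝ | 0 ≤ μ ∧ 2 ≤ Module.finrank ℝ
        (Submodule.span ℝ {x ∈ lat c1 c2 | ‖x‖ ≤ μ})} := by
    ext μ
    simp only [Set.mem_setOf_eq, and_congr_right_iff]
    intro hμ
    constructor
    · intro h1
      -- there is a nonzero element of the set
      by_cases hx : ∃ x ∈ {x ∈ lat c1 c2 | ‖x‖ ≤ μ}, x ≠ 0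
      · obtain ⟨x, ⟨⟨m, n, hmn⟩, hxμ⟩, hx0⟩ := hx
        have hmn0 : ¬(m = 0 ∧ n = 0) := by
          rintro ⟨rfl, rfl⟩; simp at hmn; exact hx0 hmn
        have h10 : (10:ℝ) ≤ μ ^ 2 := by
          have := hkey m n
          rw [← hmn] at this
          have h1le : (1:ℝ) ≤ (m:ℝ)^2 + (n:ℝ)^2 := by
            rcases not_and_or.mp hmn0 with hm | hn
            · have : (1:ℤ) ≤ m^2 := by
                have := Int.one_le_abs (z := m) (by simpa using hm)
                nlinarith [sq_abs m]
              have : (1:ℝ) ≤ (m:ℝ)^2 := by exact_mod_cast this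
              nlinarith [sq_nonneg (n:ℝ)]
            · have : (1:ℤ) ≤ n^2 := by
                have := Int.one_le_abs (z := n) (by simpa using hn)
                nlinarith [sq_abs n]
              have : (1:ℝ) ≤ (n:ℝ)^2 := by exact_mod_cast this
              nlinarith [sq_nonneg (m:ℝ)]
          nlinarith [norm_nonneg x]
        have hsqrt : Real.sqrt 10 ≤ μ := by
          rw [show μ = Real.sqrt (μ^2) by rw [Real.sqrt_sq hμ]]
          exact Real.sqrt_le_sqrt h10
        have hc1mem : c1 ∈ {x ∈ lat c1 c2 | ‖x‖ ≤ μ} := by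
          refine ⟨⟨1, 0, by simp⟩, ?_⟩; rw [hc1ne]; exact hsqrt
        have hc2mem : c2 ∈ {x ∈ lat c1 c2 | ‖x‖ ≤ μ} := by
          refine ⟨⟨0, 1, by simp⟩, ?_⟩; rw [hc2ne]; exact hsqrt
        have hle : Submodule.span ℝ (Set.range ![c1, c2]) ≤
            Submodule.span ℝ {x ∈ lat c1 c2 | ‖x‖ ≤ μ} := by
          apply Submodule.span_mono
          intro y hy
          obtain ⟨i, rfl⟩ := hy
          fin_cases i
          · exact hc1mem
          · exact hc2mem
        have := Submodule.finrank_mono hle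
        rwa [finrank_span_eq_card hind, Fintype.card_fin] at this
      · push_neg at hx
        exfalso
        have hsub : {x ∈ lat c1 c2 | ‖x‖ ≤ μ} ⊆ {0} := fun x hxm => hx x hxm
        have : Submodule.span ℝ {x ∈ lat c1 c2 | ‖x‖ ≤ μ} ≤ ⊥ := by
          rw [← Submodule.span_zero_singleton (R := ℝ)]
          exact Submodule.span_mono hsub
        have hbot : Submodule.span ℝ {x ∈ lat c1 c2 | ‖x‖ ≤ μ} = ⊥ := le_bot_iff.mp this
        rw [hbot] at h1
        simp at h1
    · intro h2; omega
  unfold succMin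
  rw [hsets]
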